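/- Let X be a Banach space, (x_n) a normalized sequence spanning l^1 almost isometrically, and (x'_n) the biorthogonal functionals on [x_n]. Then (x'_n) spans c_0 almost isometrically: there is a null sequence (δ_m) in [0,1) with (1−δ_m) max_{m≤n≤m'}|α_n| ≤ ‖Σ_{n=m}^{m'} α_n x'_n‖ ≤ (1−δ_m)^{-1} max_{m≤n≤m'}|α_n| for all m ≤ m' and scalars α_n. -/

import Mathlib

open Filter Topology
noncomputable section

/-- A normalized sequence `x` spans `ℓ¹` almost isometrically: there is a null
sequence `δ` in `[0,1)` with
`(1-δ m) ∑_{m ≤ n ≤ m'} |α n| ≤ ‖∑_{m ≤ n ≤ m'} α n • x n‖ ≤ ∑_{m ≤ n ≤ m'} |α n|`. -/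
def SpansL1Alm {X : Type*} [NormedAddCommGroup X] [NormedSpace ℝ X] (x : ℕ → X) : Prop :=
  ∃ δ : ℕ → ℝ, (∀ n, δ n ∈ Set.Ico (0 : ℝ) 1) ∧ Tendsto δ atTop (𝓝 0) ∧
    ∀ (m m' : ℕ) (α : ℕ → ℝ),
      (1 - δ m) * ∑ n ∈ Finset.Icc m m', |α n| ≤ ‖∑ n ∈ Finset.Icc m m', α n • x n‖ ∧
      ‖∑ n ∈ Finset.Icc m m', α n • x n‖ ≤ ∑ n ∈ Finset.Icc m m', |α n|

namespace BioC0
open Finset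

variable {X : Type*} [NormedAddCommGroup X] [NormedSpace ℝ X]

def bvec (x : ℕ → X) (c : ℕ →₀ ℝ) : X := Finsupp.linearCombination ℝ x c

def btail (m : ℕ) (c : ℕ →₀ ℝ) : ℝ := ∑ n ∈ c.support \ Finset.range m, |c n|

def bS (x : ℕ → X) (m : ℕ) : Set ℝ := {r | ∃ c : ℕ →₀ ℝ, ‖bvec x c‖ ≤ 1 ∧ r = btail m c}

def brho (x : ℕ → X) (m : ℕ) : ℝ := sSup (bS x m)

lemma btail_nonneg (m : ℕ) (c : ℕ →₀ ℝ) : 0 ≤ btail m c :=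
  Finset.sum_nonneg fun _ _ => abs_nonneg _

lemma bvec_eq_sum (x : ℕ → X) (c : ℕ →₀ ℝ) {s : Finset ℕ} (hs : c.support ⊆ s) :
    bvec x c = ∑ n ∈ s, c n • x n := by
  rw [bvec, Finsupp.linearCombination_apply, Finsupp.sum]
  exact Finset.sum_subset hs (fun n _ h => by
    rw [Finsupp.notMem_support_iff.mp h, zero_smul])

lemma supp_subset_Icc (c : ℕ →₀ ℝ) : c.support ⊆ Finset.Icc 0 (c.support.sup id) :=
  fun n hn => Finset.mem_Icc.mpr ⟨Nat.zero_le _, Finset.le_sup (f := id) hn⟩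

lemma abs_sum_eq (c : ℕ →₀ ℝ) {s : Finset ℕ} (hs : c.support ⊆ s) :
    ∑ n ∈ s, |c n| = ∑ n ∈ c.support, |c n| :=
  (Finset.sum_subset hs (fun n _ h => by
    rw [Finsupp.notMem_support_iff.mp h, abs_zero])).symm

section withx
variable {x : ℕ → X} {δ : ℕ → ℝ}
variable (hnorm : ∀ n, ‖x n‖ = 1)
variable (hlow : ∀ (m m' : ℕ) (α : ℕ → ℝ),
  (1 - δ m) * ∑ n ∈ Finset.Icc m m', |α n| ≤ ‖∑ n ∈ Finset.Icc m m', α n • x n‖)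
variable (hδ0 : δ 0 ∈ Set.Ico (0:ℝ) 1)

include hlow in
/-- total ℓ¹ mass bound -/
lemma total_abs_le : ∀ c : ℕ →₀ ℝ,
    (1 - δ 0) * ∑ n ∈ c.support, |c n| ≤ ‖bvec x c‖ := by
  intro c
  have h1 := hlow 0 (c.support.sup id) c
  rw [← bvec_eq_sum x c (supp_subset_Icc c), abs_sum_eq c (supp_subset_Icc c)] at h1
  exact h1

lemma btail_le_total (m : ℕ) (c : ℕ →₀ ℝ) : btail m c ≤ ∑ n ∈ c.support, |c n| :=
  Finset.sum_le_sum_of_subset_of_nonneg (Finset.sdiff_subset)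
    (fun _ _ _ => abs_nonneg _)

include hlow hδ0 in
lemma btail_le_K {m : ℕ} {c : ℕ →₀ ℝ} (hc : ‖bvec x c‖ ≤ 1) :
    btail m c ≤ (1 - δ 0)⁻¹ := by
  have h0 : (0:ℝ) < 1 - δ 0 := by linarith [hδ0.2]
  have h1 := (total_abs_le hlow c).trans hc
  have h2 : ∑ n ∈ c.support, |c n| ≤ (1 - δ 0)⁻¹ := by
    have hc2 : ∑ n ∈ c.support, |c n| = (1 - δ 0)⁻¹ * ((1 - δ 0) * ∑ n ∈ c.support, |c n|) := by
      field_simp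
    rw [hc2]
    calc (1 - δ 0)⁻¹ * ((1 - δ 0) * ∑ n ∈ c.support, |c n|) ≤ (1 - δ 0)⁻¹ * 1 :=
          mul_le_mul_of_nonneg_left h1 (inv_nonneg.mpr h0.le)
      _ = (1 - δ 0)⁻¹ := mul_one _
  exact (btail_le_total m c).trans h2

include hnorm in
lemma one_mem_bS (m : ℕ) : (1:ℝ) ∈ bS x m := by
  refine ⟨Finsupp.single m 1, ?_, ?_⟩
  · rw [bvec, Finsupp.linearCombination_single, one_smul, hnorm]
  · rw [btail, Finsupp.support_single_ne_zero m one_ne_zero]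
    have : ({m} : Finset ℕ) \ Finset.range m = {m} := by
      rw [Finset.sdiff_eq_self_iff_disjoint]
      simp
    rw [this, Finset.sum_singleton, Finsupp.single_eq_same, abs_one]

include hlow hδ0 in
lemma bS_bddAbove (m : ℕ) : BddAbove (bS x m) := by
  refine ⟨(1 - δ 0)⁻¹, fun r hr => ?_⟩
  obtain ⟨c, hc, rfl⟩ := hr
  exact btail_le_K hlow hδ0 hc

include hnorm hlow hδ0 in
lemma one_le_brho (m : ℕ) : 1 ≤ brho x m :=
  le_csSup (bS_bddAbove hlow hδ0 m) (one_mem_bS hnorm m)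

lemma btail_antitone {m m' : ℕ} (h : m ≤ m') (c : ℕ →₀ ℝ) : btail m' c ≤ btail m c :=
  Finset.sum_le_sum_of_subset_of_nonneg
    (Finset.sdiff_subset_sdiff (le_refl _) (Finset.range_subset_range.mpr h))
    (fun _ _ _ => abs_nonneg _)

include hnorm hlow hδ0 in
lemma brho_antitone : Antitone (brho x) := by
  intro m m' h
  apply csSup_le ⟨1, one_mem_bS hnorm m'⟩
  rintro r ⟨c, hc, rfl⟩
  exact (btail_antitone h c).trans (le_csSup (bS_bddAbove hlow hδ0 m) ⟨c, hc, rfl⟩)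

include hnorm hlow hδ0 in
lemma btail_le_brho_mul (m : ℕ) (c : ℕ →₀ ℝ) : btail m c ≤ brho x m * ‖bvec x c‖ := by
  rcases eq_or_lt_of_le (norm_nonneg (bvec x c)) with h0 | h0
  · -- norm zero
    have h1 : (1 - δ 0) * ∑ n ∈ c.support, |c n| ≤ 0 := by
      rw [h0]; exact total_abs_le hlow c
    have hpos : (0:ℝ) < 1 - δ 0 := by linarith [hδ0.2]
    have hSnn : 0 ≤ ∑ n ∈ c.support, |c n| :=
      Finset.sum_nonneg fun _ _ => abs_nonneg _
    have h2 : ∑ n ∈ c.support, |c n| ≤ 0 := by nlinarith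
    calc btail m c ≤ ∑ n ∈ c.support, |c n| := btail_le_total m c
      _ ≤ 0 := h2
      _ ≤ brho x m * ‖bvec x c‖ := by rw [← h0, mul_zero]
  · set b := ‖bvec x c‖ with hb
    have hbne : b ≠ 0 := ne_of_gt h0
    set c' : ℕ →₀ ℝ := b⁻¹ • c with hc'
    have hsupp : c'.support = c.support := Finsupp.support_smul_eq (inv_ne_zero hbne)
    have hvc' : bvec x c' = b⁻¹ • bvec x c := by
      rw [bvec, bvec, hc', map_smul]
    have hn : ‖bvec x c'‖ ≤ 1 := by
      rw [hvc', norm_smul, norm_inv, Real.norm_eq_abs, abs_of_pos h0, inv_mul_cancel₀ hbne]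
    have htail : btail m c' = b⁻¹ * btail m c := by
      rw [btail, btail, hsupp, Finset.mul_sum]
      refine Finset.sum_congr rfl fun n _ => ?_
      rw [hc', Finsupp.smul_apply, smul_eq_mul, abs_mul, abs_of_pos (inv_pos.mpr h0)]
    have hmem : btail m c' ∈ bS x m := ⟨c', hn, rfl⟩
    have := le_csSup (bS_bddAbove hlow hδ0 m) hmem
    rw [htail] at this
    calc btail m c = b * (b⁻¹ * btail m c) := by field_simp
      _ ≤ b * brho x m := by
          exact mul_le_mul_of_nonneg_left this (le_of_lt h0)
      _ = brho x m * b := mul_comm _ _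

end withx

variable {x : ℕ → X} {δ : ℕ → ℝ} {x' : ℕ → StrongDual ℝ X}

lemma coeff_eq (hbi : ∀ n k, x' n (x k) = if n = k then 1 else 0) (c : ℕ →₀ ℝ) (k : ℕ) :
    x' k (bvec x c) = c k := by
  rw [bvec, Finsupp.linearCombination_apply, Finsupp.sum, map_sum]
  have h1 : ∀ n ∈ c.support, x' k (c n • x n) = if n = k then c n else 0 := by
    intro n _
    rw [map_smul, hbi k n, smul_eq_mul]
    rcases eq_or_ne n k with h | h
    · subst h; simp
    · rw [if_neg (Ne.symm h), if_neg h, mul_zero]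
  rw [Finset.sum_congr rfl h1, Finset.sum_ite_eq' c.support k (fun n => c n)]
  split_ifs with h
  · rfl
  · exact (Finsupp.notMem_support_iff.mp h).symm

lemma icc_abs_le_btail (m m' : ℕ) (c : ℕ →₀ ℝ) :
    ∑ n ∈ Finset.Icc m m', |c n| ≤ btail m c := by
  have h1 : ∑ n ∈ (Finset.Icc m m') ∩ c.support, |c n| = ∑ n ∈ Finset.Icc m m', |c n| :=
    Finset.sum_subset Finset.inter_subset_left (fun n hn hn2 => by
      have : n ∉ c.support := fun hs => hn2 (Finset.mem_inter.mpr ⟨hn, hs⟩)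
      rw [Finsupp.notMem_support_iff.mp this, abs_zero])
  rw [← h1]
  refine Finset.sum_le_sum_of_subset_of_nonneg ?_ (fun _ _ _ => abs_nonneg _)
  intro n hn
  rcases Finset.mem_inter.mp hn with ⟨h2, h3⟩
  exact Finset.mem_sdiff.mpr ⟨h3, fun hr => (Nat.lt_irrefl n)
    (Nat.lt_of_lt_of_le (Finset.mem_range.mp hr) (Finset.mem_Icc.mp h2).1)⟩

lemma fnorm_le
    (hdense : (Submodule.span ℝ (Set.range x)).topologicalClosure = ⊤)
    (hbi : ∀ n k, x' n (x k) = if n = k then 1 else 0)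
    (m m' : ℕ) (α : ℕ → ℝ) (C D : ℝ) (hC : 0 ≤ C) (hD : 0 ≤ D)
    (hsup : ∀ n ∈ Finset.Icc m m', |α n| ≤ C)
    (hbt : ∀ c : ℕ →₀ ℝ, btail m c ≤ D * ‖bvec x c‖) :
    ‖∑ n ∈ Finset.Icc m m', α n • x' n‖ ≤ D * C := by
  set f := ∑ n ∈ Finset.Icc m m', α n • x' n with hf
  apply ContinuousLinearMap.opNorm_le_bound f (mul_nonneg hD hC)
  intro y
  set S : Set X := {y : X | |f y| ≤ D * C * ‖y‖} with hS
  have hclosed : IsClosed S := isClosed_le (by continuity) (by continuity)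
  have hspan : (Submodule.span ℝ (Set.range x) : Set X) ⊆ S := by
    intro y hy
    obtain ⟨c, hc⟩ := Finsupp.mem_span_range_iff_exists_finsupp.mp hy
    have hyv : y = bvec x c := by
      rw [bvec, Finsupp.linearCombination_apply]; exact hc.symm
    have hcoef : ∀ k, x' k y = c k := by
      intro k; rw [hyv]; exact coeff_eq hbi c k
    have hfy : f y = ∑ n ∈ Finset.Icc m m', α n * c n := by
      rw [hf, ContinuousLinearMap.sum_apply]
      exact Finset.sum_congr rfl fun n _ => by
        rw [ContinuousLinearMap.smul_apply, smul_eq_mul, hcoef n]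
    have : |f y| ≤ D * C * ‖y‖ := by
      rw [hfy]
      calc |∑ n ∈ Finset.Icc m m', α n * c n| ≤ ∑ n ∈ Finset.Icc m m', |α n * c n| :=
            Finset.abs_sum_le_sum_abs _ _
        _ ≤ ∑ n ∈ Finset.Icc m m', C * |c n| := by
            refine Finset.sum_le_sum fun n hn => ?_
            rw [abs_mul]
            exact mul_le_mul_of_nonneg_right (hsup n hn) (abs_nonneg _)
        _ = C * ∑ n ∈ Finset.Icc m m', |c n| := by rw [Finset.mul_sum]
        _ ≤ C * btail m c := mul_le_mul_of_nonneg_left (icc_abs_le_btail m m' c) hC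
        _ ≤ C * (D * ‖bvec x c‖) := mul_le_mul_of_nonneg_left (hbt c) hC
        _ = D * C * ‖y‖ := by rw [hyv]; ring
    exact this
  have hcl : closure (Submodule.span ℝ (Set.range x) : Set X) = Set.univ := by
    rw [← Submodule.topologicalClosure_coe, hdense]; rfl
  have hy : y ∈ S := by
    have : y ∈ closure (Submodule.span ℝ (Set.range x) : Set X) := by
      rw [hcl]; trivial
    exact hclosed.closure_subset_iff.mpr hspan this
  exact hy

lemma feval {x : ℕ → X} {x' : ℕ → StrongDual ℝ X}
    (hbi : ∀ n k, x' n (x k) = if n = k then 1 else 0)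
    (m m' n0 : ℕ) (hn0 : n0 ∈ Finset.Icc m m') (α : ℕ → ℝ) :
    (∑ n ∈ Finset.Icc m m', α n • x' n) (x n0) = α n0 := by
  rw [ContinuousLinearMap.sum_apply]
  have h1 : ∀ n ∈ Finset.Icc m m', (α n • x' n) (x n0) = if n = n0 then α n else 0 := by
    intro n _
    rw [ContinuousLinearMap.smul_apply, hbi n n0, smul_eq_mul]
    rcases eq_or_ne n n0 with h | h
    · rw [if_pos h, if_pos h, mul_one]
    · rw [if_neg h, if_neg h, mul_zero]
  rw [Finset.sum_congr rfl h1, Finset.sum_ite_eq' _ n0 (fun n => α n), if_pos hn0]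

set_option maxHeartbeats 1000000 in
lemma brho_tendsto_one
    (hnorm : ∀ n, ‖x n‖ = 1)
    (hδI : ∀ n, δ n ∈ Set.Ico (0:ℝ) 1)
    (hδlim : Tendsto δ atTop (𝓝 0))
    (hlow : ∀ (m m' : ℕ) (α : ℕ → ℝ),
      (1 - δ m) * ∑ n ∈ Finset.Icc m m', |α n| ≤ ‖∑ n ∈ Finset.Icc m m', α n • x n‖)
    (brho : ℕ → ℝ)
    (hanti : Antitone brho)
    (hone : ∀ m, 1 ≤ brho m)
    (hmem : ∀ m (c : ℕ →₀ ℝ), ‖bvec x c‖ ≤ 1 → btail m c ≤ brho m)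
    (hach : ∀ m (r : ℝ), r < brho m → ∃ c : ℕ →₀ ℝ, ‖bvec x c‖ ≤ 1 ∧ r < btail m c) :
    Tendsto brho atTop (𝓝 1) := by
  have hbdd : BddBelow (Set.range brho) := ⟨1, by rintro r ⟨m, rfl⟩; exact hone m⟩
  have htend := tendsto_atTop_ciInf hanti hbdd
  set Γ := ⨅ m, brho m with hΓ
  have hΓ1 : 1 ≤ Γ := le_ciInf hone
  have hΓle : Γ ≤ 1 := by
    by_contra hne
    push_neg at hne
    set ε0 := min (Γ - 1) 1 with hε0
    have hε0pos : 0 < ε0 := lt_min (by linarith) one_pos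
    have hε0le : ε0 ≤ 1 := min_le_right _ _
    have hΓge : 1 + ε0 ≤ Γ := by
      have := min_le_left (Γ - 1) 1; linarith
    set ε' := ε0 / 6 with hε'
    set η := ε0 / 8 with hη
    obtain ⟨ma, hma⟩ := eventually_atTop.mp (hδlim.eventually_lt_const (by positivity : (0:ℝ) < η))
    obtain ⟨mb, hmb⟩ : ∃ mb, brho mb < Γ + ε' := by
      apply exists_lt_of_ciInf_lt
      rw [← hΓ]; linarith
    set m0 := max ma mb with hm0
    have hρm0 : brho m0 < Γ + ε' := lt_of_le_of_lt (hanti (le_max_right _ _)) hmb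
    have hδm0 : δ m0 < η := hma m0 (le_max_left _ _)
    have hΓε' : (0:ℝ) < Γ - ε' := by linarith
    -- choose near optimal vectors
    have hex : ∀ j : ℕ, ∃ c : ℕ →₀ ℝ, ‖bvec x c‖ ≤ 1 ∧ Γ - ε' < btail (m0 + j) c := by
      intro j
      apply hach
      have : Γ ≤ brho (m0 + j) := ciInf_le hbdd (m0 + j)
      linarith
    choose c hc1 hc2 using hex
    have hKb : ∀ j, btail m0 (c j) < Γ + ε' := fun j =>
      lt_of_le_of_lt (hmem m0 (c j) (hc1 j)) hρm0
    -- coordinates bounded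
    have h1δ : (0:ℝ) < 1 - δ 0 := by have := (hδI 0).2; linarith
    set K := (1 - δ 0)⁻¹ with hK
    have hKnn : (0:ℝ) ≤ K := inv_nonneg.mpr h1δ.le
    have htot : ∀ j, ∑ n ∈ (c j).support, |c j n| ≤ K := by
      intro j
      have h2 := hlow 0 ((c j).support.sup id) (c j)
      have hsub : (c j).support ⊆ Finset.Icc 0 ((c j).support.sup id) :=
        fun n hn => Finset.mem_Icc.mpr ⟨Nat.zero_le _, Finset.le_sup (f := id) hn⟩
      have hveq : bvec x (c j) = ∑ n ∈ Finset.Icc 0 ((c j).support.sup id), c j n • x n := by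
        rw [bvec, Finsupp.linearCombination_apply, Finsupp.sum]
        exact Finset.sum_subset hsub (fun n _ h => by
          rw [Finsupp.notMem_support_iff.mp h, zero_smul])
      have habs : ∑ n ∈ Finset.Icc 0 ((c j).support.sup id), |c j n| = ∑ n ∈ (c j).support, |c j n| :=
        (Finset.sum_subset hsub (fun n _ h => by
          rw [Finsupp.notMem_support_iff.mp h, abs_zero])).symm
      rw [habs, ← hveq] at h2
      have h3 : (1 - δ 0) * ∑ n ∈ (c j).support, |c j n| ≤ 1 := h2.trans (hc1 j)
      have h4 : ∑ n ∈ (c j).support, |c j n|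
          = K * ((1 - δ 0) * ∑ n ∈ (c j).support, |c j n|) := by
        rw [hK]; field_simp
      rw [h4]
      calc K * ((1 - δ 0) * ∑ n ∈ (c j).support, |c j n|) ≤ K * 1 :=
            mul_le_mul_of_nonneg_left h3 hKnn
        _ = K := mul_one _
    have hcoordK : ∀ j i, |c j i| ≤ K := by
      intro j i
      by_cases hi : i ∈ (c j).support
      · exact (Finset.single_le_sum (f := fun n => |c j n|) (fun _ _ => abs_nonneg _) hi).trans (htot j)
      · rw [Finsupp.notMem_support_iff.mp hi, abs_zero]; exact hKnn
    -- compactness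
    set H : ℕ → (Fin m0 → ℝ) := fun j i => c j i with hH
    have hHb : ∀ j, H j ∈ Metric.closedBall (0 : Fin m0 → ℝ) K := by
      intro j
      rw [Metric.mem_closedBall, dist_zero_right]
      refine (pi_norm_le_iff_of_nonneg hKnn).mpr fun i => ?_
      rw [Real.norm_eq_abs]; exact hcoordK j i
    obtain ⟨a, -, φ, hφ, hconv⟩ :=
      tendsto_subseq_of_bounded Metric.isBounded_closedBall hHb
    set ε₂ := ε0 / (8 * (m0 + 1)) with hε₂def
    have hε₂pos : 0 < ε₂ := by positivity
    obtain ⟨J, hJ⟩ := (Metric.tendsto_atTop.mp hconv) (ε₂ / 2) (half_pos hε₂pos)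
    set cJ := c (φ J) with hcJ
    set N1 := cJ.support.sup id with hN1
    set j2 := max J (N1 + 1) with hj2
    set c2 := c (φ j2) with hc2def
    set m1 := m0 + φ J with hm1
    set m2 := m0 + φ j2 with hm2
    have hm2N1 : N1 < m2 := by
      have h1 : j2 ≤ φ j2 := hφ.le_apply
      have h2 : N1 + 1 ≤ j2 := le_max_right _ _
      omega
    have hm0m1 : m0 ≤ m1 := Nat.le_add_right _ _
    have hm0m2 : m0 ≤ m2 := Nat.le_add_right _ _
    have hhead : ∀ i, i < m0 → |cJ i - c2 i| ≤ ε₂ := by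
      intro i hi
      have d1 := hJ J (le_refl J)
      have d2 := hJ j2 (le_max_left _ _)
      have hd : dist (H (φ J)) (H (φ j2)) < ε₂ := by
        calc dist (H (φ J)) (H (φ j2)) ≤ dist (H (φ J)) a + dist (H (φ j2)) a :=
              dist_triangle_right _ _ _
          _ < ε₂ / 2 + ε₂ / 2 := add_lt_add d1 d2
          _ = ε₂ := add_halves _
      have hco := (dist_le_pi_dist (H (φ J)) (H (φ j2)) ⟨i, hi⟩).trans hd.le
      rw [Real.dist_eq] at hco
      exact hco
    -- the difference vector
    set zf : ℕ →₀ ℝ := cJ - c2 with hzf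
    have hzapp : ∀ n, zf n = cJ n - c2 n := fun n => Finsupp.sub_apply _ _ _
    have hcJbd : ∀ n, N1 < n → cJ n = 0 := by
      intro n hn
      by_contra h
      have := Finset.le_sup (f := id) (Finsupp.mem_support_iff.mpr h)
      simp only [id] at this
      omega
    have hbt1 := hc2 (φ J)
    have hbt2 := hc2 (φ j2)
    have hKb2 := hKb (φ j2)
    have hne1 : ∃ n ∈ cJ.support, m1 ≤ n := by
      by_contra h
      push_neg at h
      have hempty : cJ.support \ Finset.range m1 = ∅ := by
        refine Finset.eq_empty_of_forall_notMem fun n hn => ?_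
        rcases Finset.mem_sdiff.mp hn with ⟨hs, hr⟩
        exact hr (Finset.mem_range.mpr (h n hs))
      have : btail m1 cJ = 0 := by rw [btail, hempty, Finset.sum_empty]
      rw [this] at hbt1
      linarith
    obtain ⟨n1, hn1s, hn1⟩ := hne1
    have hm0N1 : m0 ≤ N1 := by
      have := Finset.le_sup (f := id) hn1s
      simp only [id] at this
      omega
    have hne2 : ∃ n ∈ c2.support, m2 ≤ n := by
      by_contra h
      push_neg at h
      have hempty : c2.support \ Finset.range m2 = ∅ := by
        refine Finset.eq_empty_of_forall_notMem fun n hn => ?_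
        rcases Finset.mem_sdiff.mp hn with ⟨hs, hr⟩
        exact hr (Finset.mem_range.mpr (h n hs))
      have : btail m2 c2 = 0 := by rw [btail, hempty, Finset.sum_empty]
      rw [this] at hbt2
      linarith
    obtain ⟨n2, hn2s, hn2⟩ := hne2
    have hn2z : n2 ∈ zf.support := by
      rw [Finsupp.mem_support_iff, hzapp, hcJbd n2 (by omega), zero_sub, neg_ne_zero]
      exact Finsupp.mem_support_iff.mp hn2s
    set M' := zf.support.sup id with hM'
    have hm2M' : m2 ≤ M' := by
      have := Finset.le_sup (f := id) hn2z
      simp only [id] at this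
      omega
    have hN1M' : N1 < M' := lt_of_lt_of_le hm2N1 hm2M'
    have hm0M' : m0 ≤ M' := le_trans hm0m2 hm2M'
    have hzsupp : zf.support ⊆ Finset.range (M' + 1) := fun n hn =>
      Finset.mem_range.mpr (Nat.lt_succ_of_le (Finset.le_sup (f := id) hn))
    have hbz : ‖bvec x zf‖ ≤ 2 := by
      have heq : bvec x zf = bvec x cJ - bvec x c2 := by
        rw [hzf, bvec, bvec, bvec, map_sub]
      rw [heq]
      exact (norm_sub_le _ _).trans (by linarith [hc1 (φ J), hc1 (φ j2)])
    have hveq : bvec x zf = ∑ n ∈ Finset.range (M' + 1), zf n • x n := by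
      rw [bvec, Finsupp.linearCombination_apply, Finsupp.sum]
      exact Finset.sum_subset hzsupp (fun n _ h => by
        rw [Finsupp.notMem_support_iff.mp h, zero_smul])
    have hsplit : bvec x zf
        = (∑ n ∈ Finset.range m0, zf n • x n) + ∑ n ∈ Finset.Icc m0 M', zf n • x n := by
      rw [hveq, Finset.range_eq_Ico, ← Finset.sum_Ico_consecutive _ (Nat.zero_le m0)
        (by omega : m0 ≤ M' + 1), Finset.Ico_add_one_right_eq_Icc, Finset.range_eq_Ico]
    have hHd : ‖∑ n ∈ Finset.range m0, zf n • x n‖ ≤ ε0 / 8 := by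
      calc ‖∑ n ∈ Finset.range m0, zf n • x n‖ ≤ ∑ n ∈ Finset.range m0, ‖zf n • x n‖ :=
            norm_sum_le _ _
        _ = ∑ n ∈ Finset.range m0, |zf n| := by
            refine Finset.sum_congr rfl fun n _ => ?_
            rw [norm_smul, hnorm, Real.norm_eq_abs, mul_one]
        _ ≤ ∑ _n ∈ Finset.range m0, ε₂ := by
            refine Finset.sum_le_sum fun n hn => ?_
            rw [hzapp]
            exact hhead n (Finset.mem_range.mp hn)
        _ = (m0 : ℝ) * ε₂ := by rw [Finset.sum_const, Finset.card_range, nsmul_eq_mul]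
        _ ≤ ε0 / 8 := by
            rw [hε₂def]
            rw [mul_comm, div_mul_eq_mul_div, div_le_div_iff₀ (by positivity)
              (by norm_num : (0:ℝ) < 8)]
            nlinarith [hε0pos.le, Nat.cast_nonneg (α := ℝ) m0]
    have hT := hlow m0 M' zf
    have hsum2 : ∑ n ∈ Finset.Icc m0 M', |zf n|
        = (∑ n ∈ Finset.Icc m0 N1, |zf n|) + ∑ n ∈ Finset.Ico (N1 + 1) (M' + 1), |zf n| := by
      rw [← Finset.Ico_add_one_right_eq_Icc, ← Finset.sum_Ico_consecutive _ (by omega : m0 ≤ N1 + 1)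
        (by omega : N1 + 1 ≤ M' + 1), Finset.Ico_add_one_right_eq_Icc]
    have hA : btail m1 cJ ≤ ∑ n ∈ Finset.Icc m0 N1, |cJ n| := by
      refine Finset.sum_le_sum_of_subset_of_nonneg ?_ (fun _ _ _ => abs_nonneg _)
      intro n hn
      rcases Finset.mem_sdiff.mp hn with ⟨hs, hr⟩
      have h1 : m1 ≤ n := by
        by_contra hx2
        exact hr (Finset.mem_range.mpr (by omega))
      have h2 : n ≤ N1 := by
        have := Finset.le_sup (f := id) hs
        simpa using this
      exact Finset.mem_Icc.mpr ⟨by omega, h2⟩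
    have hB : ∑ n ∈ Finset.Icc m0 N1, |c2 n| ≤ btail m0 c2 - btail m2 c2 := by
      have hsub : (c2.support \ Finset.range m2) ⊆ (c2.support \ Finset.range m0) :=
        Finset.sdiff_subset_sdiff (le_refl _) (Finset.range_subset_range.mpr hm0m2)
      rw [btail, btail, ← Finset.sum_sdiff_eq_sub hsub]
      have heq : ∑ n ∈ Finset.Icc m0 N1, |c2 n|
          = ∑ n ∈ (Finset.Icc m0 N1) ∩ c2.support, |c2 n| :=
        (Finset.sum_subset Finset.inter_subset_left (fun n hn hn2 => by
          have : n ∉ c2.support := fun hs => hn2 (Finset.mem_inter.mpr ⟨hn, hs⟩)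
          rw [Finsupp.notMem_support_iff.mp this, abs_zero])).symm
      rw [heq]
      refine Finset.sum_le_sum_of_subset_of_nonneg ?_ (fun _ _ _ => abs_nonneg _)
      intro n hn
      rcases Finset.mem_inter.mp hn with ⟨hIcc, hsupp⟩
      rcases Finset.mem_Icc.mp hIcc with ⟨hge, hle⟩
      refine Finset.mem_sdiff.mpr ⟨Finset.mem_sdiff.mpr ⟨hsupp, fun hr => ?_⟩, fun hin => ?_⟩
      · have := Finset.mem_range.mp hr; omega
      · rcases Finset.mem_sdiff.mp hin with ⟨-, hr2⟩
        exact hr2 (Finset.mem_range.mpr (by omega))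
    have hT1 : (Γ - ε') - 2 * ε' ≤ ∑ n ∈ Finset.Icc m0 N1, |zf n| := by
      have h1 : ∑ n ∈ Finset.Icc m0 N1, (|cJ n| - |c2 n|) ≤ ∑ n ∈ Finset.Icc m0 N1, |zf n| := by
        refine Finset.sum_le_sum fun n _ => ?_
        rw [hzapp]
        exact abs_sub_abs_le_abs_sub _ _
      rw [Finset.sum_sub_distrib] at h1
      have h2 : ∑ n ∈ Finset.Icc m0 N1, |c2 n| ≤ 2 * ε' := by
        have := hB
        linarith
      linarith [hA, hbt1]
    have hT2 : Γ - ε' ≤ ∑ n ∈ Finset.Ico (N1 + 1) (M' + 1), |zf n| := by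
      have heq2 : ∑ n ∈ c2.support \ Finset.range m2, |c2 n|
          = ∑ n ∈ c2.support \ Finset.range m2, |zf n| := by
        refine Finset.sum_congr rfl fun n hn => ?_
        rcases Finset.mem_sdiff.mp hn with ⟨hs, hr⟩
        have hge : m2 ≤ n := by
          by_contra hx2
          exact hr (Finset.mem_range.mpr (by omega))
        rw [hzapp, hcJbd n (by omega), zero_sub, abs_neg]
      have hsub2 : c2.support \ Finset.range m2 ⊆ Finset.Ico (N1 + 1) (M' + 1) := by
        intro n hn
        rcases Finset.mem_sdiff.mp hn with ⟨hs, hr⟩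
        have hge : m2 ≤ n := by
          by_contra hx2
          exact hr (Finset.mem_range.mpr (by omega))
        have hnz : n ∈ zf.support := by
          rw [Finsupp.mem_support_iff, hzapp, hcJbd n (by omega), zero_sub, neg_ne_zero]
          exact Finsupp.mem_support_iff.mp hs
        have hleM : n ≤ M' := by
          have := Finset.le_sup (f := id) hnz
          simpa using this
        exact Finset.mem_Ico.mpr ⟨by omega, by omega⟩
      calc Γ - ε' ≤ btail m2 c2 := hbt2.le
        _ = ∑ n ∈ c2.support \ Finset.range m2, |zf n| := heq2
        _ ≤ ∑ n ∈ Finset.Ico (N1 + 1) (M' + 1), |zf n| :=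
            Finset.sum_le_sum_of_subset_of_nonneg hsub2 (fun _ _ _ => abs_nonneg _)
    have hfin1 : (1 - δ m0) * ∑ n ∈ Finset.Icc m0 M', |zf n| ≤ 2 + ε0 / 8 := by
      refine hT.trans ?_
      have heq : ∑ n ∈ Finset.Icc m0 M', zf n • x n
          = bvec x zf - ∑ n ∈ Finset.range m0, zf n • x n := by
        rw [hsplit]; abel
      rw [heq]
      exact (norm_sub_le _ _).trans (by linarith)
    have hS : 2 * Γ - 4 * ε' ≤ ∑ n ∈ Finset.Icc m0 M', |zf n| := by
      rw [hsum2]; linarith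
    have hSnn : 0 ≤ 2 * Γ - 4 * ε' := by
      rw [hε']; linarith
    have hδm0nn := (hδI m0).1
    have hprod : (1 - η) * (2 * Γ - 4 * ε') ≤ (1 - δ m0) * ∑ n ∈ Finset.Icc m0 M', |zf n| := by
      calc (1 - η) * (2 * Γ - 4 * ε') ≤ (1 - δ m0) * (2 * Γ - 4 * ε') :=
            mul_le_mul_of_nonneg_right (by linarith) hSnn
        _ ≤ (1 - δ m0) * ∑ n ∈ Finset.Icc m0 M', |zf n| :=
            mul_le_mul_of_nonneg_left hS (by linarith [(hδI m0).2])
    have hcontr : (1 - η) * (2 * Γ - 4 * ε') ≤ 2 + ε0 / 8 := hprod.trans hfin1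
    rw [hη, hε'] at hcontr
    have h5 : (1 - ε0 / 8) * (2 * (1 + ε0) - 4 * (ε0 / 6))
        ≤ (1 - ε0 / 8) * (2 * Γ - 4 * (ε0 / 6)) :=
      mul_le_mul_of_nonneg_left (by linarith) (by linarith)
    have hε0sq : ε0 * ε0 ≤ ε0 := by nlinarith
    nlinarith [h5, hε0sq, hε0pos, hcontr]
  have : Γ = 1 := le_antisymm hΓle hΓ1
  rwa [this] at htend

end BioC0

/-- The biorthogonal functionals of a normalized almost isometric ℓ¹-basis
span c₀ almost isometrically. -/
theorem biorthogonal_spans_c0_alm {X : Type*} [NormedAddCommGroup X] [NormedSpace ℝ X]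
    [CompleteSpace X] (x : ℕ → X) (hnorm : ∀ n, ‖x n‖ = 1) (hx : SpansL1Alm x)
    (hdense : (Submodule.span ℝ (Set.range x)).topologicalClosure = ⊤)
    (x' : ℕ → StrongDual ℝ X)
    (hbi : ∀ n k, x' n (x k) = if n = k then 1 else 0) :
    ∃ δ : ℕ → ℝ, (∀ n, δ n ∈ Set.Ico (0 : ℝ) 1) ∧ Tendsto δ atTop (𝓝 0) ∧
      ∀ (m m' : ℕ) (h : m ≤ m') (α : ℕ → ℝ),
        (1 - δ m) * (Finset.Icc m m').sup' (Finset.nonempty_Icc.mpr h) (fun n => |α n|)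
            ≤ ‖∑ n ∈ Finset.Icc m m', α n • x' n‖ ∧
        ‖∑ n ∈ Finset.Icc m m', α n • x' n‖ ≤
          (1 - δ m)⁻¹ * (Finset.Icc m m').sup' (Finset.nonempty_Icc.mpr h) (fun n => |α n|) := by
  classical
  obtain ⟨δ₁, hδI, hδlim, hδb⟩ := hx
  have hlow : ∀ (m m' : ℕ) (α : ℕ → ℝ),
      (1 - δ₁ m) * ∑ n ∈ Finset.Icc m m', |α n| ≤ ‖∑ n ∈ Finset.Icc m m', α n • x n‖ :=
    fun m m' α => (hδb m m' α).1
  have hδ0 : δ₁ 0 ∈ Set.Ico (0:ℝ) 1 := hδI 0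
  have hone : ∀ m, 1 ≤ BioC0.brho x m := BioC0.one_le_brho hnorm hlow hδ0
  have hanti : Antitone (BioC0.brho x) := BioC0.brho_antitone hnorm hlow hδ0
  have hmem : ∀ m (c : ℕ →₀ ℝ), ‖BioC0.bvec x c‖ ≤ 1 → BioC0.btail m c ≤ BioC0.brho x m :=
    fun m c hc => le_csSup (BioC0.bS_bddAbove hlow hδ0 m) ⟨c, hc, rfl⟩
  have hach : ∀ m (r : ℝ), r < BioC0.brho x m →
      ∃ c : ℕ →₀ ℝ, ‖BioC0.bvec x c‖ ≤ 1 ∧ r < BioC0.btail m c := by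
    intro m r hr
    obtain ⟨s, hs, hrs⟩ := exists_lt_of_lt_csSup ⟨1, BioC0.one_mem_bS hnorm m⟩ hr
    obtain ⟨c, hc, rfl⟩ := hs
    exact ⟨c, hc, hrs⟩
  have htend1 : Tendsto (BioC0.brho x) atTop (𝓝 1) :=
    BioC0.brho_tendsto_one hnorm hδI hδlim hlow _ hanti hone hmem hach
  have hbt_rho : ∀ m (c : ℕ →₀ ℝ), BioC0.btail m c ≤ BioC0.brho x m * ‖BioC0.bvec x c‖ :=
    fun m c => BioC0.btail_le_brho_mul hnorm hlow hδ0 m c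
  have hρpos : ∀ m, 0 < BioC0.brho x m := fun m => lt_of_lt_of_le one_pos (hone m)
  refine ⟨fun m => 1 - (BioC0.brho x m)⁻¹, ?_, ?_, ?_⟩
  · intro m
    constructor
    · have : (BioC0.brho x m)⁻¹ ≤ 1 := by
        rw [inv_le_one₀ (hρpos m)]; exact hone m
      linarith
    · have : 0 < (BioC0.brho x m)⁻¹ := inv_pos.mpr (hρpos m)
      linarith
  · have h1 : Tendsto (fun m => (BioC0.brho x m)⁻¹) atTop (𝓝 1) := by
      have := htend1.inv₀ one_ne_zero
      simpa using this
    have h2 := (tendsto_const_nhds (x := (1:ℝ)) (f := atTop)).sub h1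
    simpa using h2
  · intro m m' h α
    set sup' := (Finset.Icc m m').sup' (Finset.nonempty_Icc.mpr h) (fun n => |α n|) with hsup'
    obtain ⟨n0, hn0mem, hsupeq⟩ :=
      Finset.exists_mem_eq_sup' (Finset.nonempty_Icc.mpr h) (fun n => |α n|)
    have hsup_nonneg : 0 ≤ sup' := by rw [hsup', hsupeq]; exact abs_nonneg _
    have hinv : 1 - (1 - (BioC0.brho x m)⁻¹) = (BioC0.brho x m)⁻¹ := by ring
    constructor
    · -- lower bound
      have hle : sup' ≤ ‖∑ n ∈ Finset.Icc m m', α n • x' n‖ := by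
        rw [hsup', hsupeq]
        calc |α n0| = ‖(∑ n ∈ Finset.Icc m m', α n • x' n) (x n0)‖ := by
              rw [BioC0.feval hbi m m' n0 hn0mem α, Real.norm_eq_abs]
          _ ≤ ‖∑ n ∈ Finset.Icc m m', α n • x' n‖ * ‖x n0‖ :=
              ContinuousLinearMap.le_opNorm _ _
          _ = ‖∑ n ∈ Finset.Icc m m', α n • x' n‖ := by rw [hnorm, mul_one]
      rw [hinv]
      calc (BioC0.brho x m)⁻¹ * sup' ≤ 1 * sup' := by
            refine mul_le_mul_of_nonneg_right ?_ hsup_nonneg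
            rw [inv_le_one₀ (hρpos m)]; exact hone m
        _ = sup' := one_mul _
        _ ≤ _ := hle
    · -- upper bound
      rw [hinv, inv_inv]
      exact BioC0.fnorm_le hdense hbi m m' α sup' (BioC0.brho x m) hsup_nonneg (hρpos m).le
        (fun n hn => Finset.le_sup' (fun n => |α n|) hn) (fun c => hbt_rho m c)
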